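/- Let L be the Laplacian of a connected undirected graph on the vertex set N partitioned into nonempty N_ac and N_dc. Suppose μ* ∈ ℝ^N and ω* ∈ ℝ satisfy (Lμ*)_i + D_i ω* = 0 for all i ∈ N_ac with constants D_i > 0, and (Lμ*)_i = 0 for all i ∈ N_dc. Then ω* = 0 and μ* is a constant vector (all components equal). -/

import Mathlib

open Matrix

/-- Equilibrium of the real-time algorithm: if `(Lμ*)ᵢ + Dᵢω* = 0` on the AC
buses and `(Lμ*)ᵢ = 0` on the DC buses, with `L` the Laplacian of a connected
graph and `Dᵢ > 0`, then `ω* = 0` and `μ*` is constant. -/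
theorem equilibrium_omega_zero_mu_const
    {V : Type*} [Fintype V] [DecidableEq V]
    (G : SimpleGraph V) [DecidableRel G.Adj] (hG : G.Connected)
    (ac : Set V) [DecidablePred (· ∈ ac)] (hac : ac.Nonempty)
    (D : V → ℝ) (hD : ∀ i ∈ ac, 0 < D i)
    (μ : V → ℝ) (ω : ℝ)
    (hAC : ∀ i ∈ ac, ((G.lapMatrix ℝ) *ᵥ μ) i + D i * ω = 0)
    (hDC : ∀ i ∉ ac, ((G.lapMatrix ℝ) *ᵥ μ) i = 0) :
    ω = 0 ∧ ∀ i j, μ i = μ j := by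
  have hsum : ∑ i, ((G.lapMatrix ℝ) *ᵥ μ) i = 0 := by
    have h1 : ∑ i, ((G.lapMatrix ℝ) *ᵥ μ) i = (fun _ : V => (1:ℝ)) ⬝ᵥ ((G.lapMatrix ℝ) *ᵥ μ) := by
      simp [dotProduct]
    rw [h1, dotProduct_mulVec, ← mulVec_transpose, (SimpleGraph.isSymm_lapMatrix ℝ G).eq,
      SimpleGraph.lapMatrix_mulVec_const_eq_zero]
    simp
  have hsplit : ∑ i, ((G.lapMatrix ℝ) *ᵥ μ) i
      = ∑ i ∈ Finset.univ.filter (· ∈ ac), ((G.lapMatrix ℝ) *ᵥ μ) i := by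
    rw [← Finset.sum_filter_add_sum_filter_not Finset.univ (· ∈ ac)]
    have : ∑ i ∈ Finset.univ.filter (¬ · ∈ ac), ((G.lapMatrix ℝ) *ᵥ μ) i = 0 := by
      apply Finset.sum_eq_zero
      intro i hi
      exact hDC i (Finset.mem_filter.mp hi).2
    rw [this, add_zero]
  have hval : ∀ i ∈ Finset.univ.filter (· ∈ ac), ((G.lapMatrix ℝ) *ᵥ μ) i = -(D i * ω) := by
    intro i hi
    have := hAC i (Finset.mem_filter.mp hi).2
    linarith
  have hsum2 : (∑ i ∈ Finset.univ.filter (· ∈ ac), D i) * ω = 0 := by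
    have := hsum
    rw [hsplit, Finset.sum_congr rfl hval] at this
    rw [Finset.sum_mul]
    have h2 : -∑ i ∈ Finset.univ.filter (· ∈ ac), D i * ω = 0 := by
      rw [Finset.sum_neg_distrib] at this; exact this
    linarith
  have hDpos : 0 < ∑ i ∈ Finset.univ.filter (· ∈ ac), D i := by
    obtain ⟨i, hi⟩ := hac
    apply Finset.sum_pos'
    · intro j hj; exact (hD j (Finset.mem_filter.mp hj).2).le
    · exact ⟨i, Finset.mem_filter.mpr ⟨Finset.mem_univ i, hi⟩, hD i hi⟩
  have hω : ω = 0 := by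
    rcases mul_eq_zero.mp hsum2 with h | h
    · exact absurd h (ne_of_gt hDpos)
    · exact h
  refine ⟨hω, ?_⟩
  have hL : (G.lapMatrix ℝ) *ᵥ μ = 0 := by
    funext i
    by_cases hi : i ∈ ac
    · have := hAC i hi; simp [hω] at this; simpa using this
    · simpa using hDC i hi
  have := (SimpleGraph.lapMatrix_mulVec_eq_zero_iff_forall_reachable G).mp (by
    exact hL)
  intro i j
  exact this i j (hG.preconnected i j)
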